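/- arXiv:1610.03408 — 5 statements merged into one kernel-verified Lean document; each statement's English description precedes it below -/
import Mathlib

section
/- Let a1 > 0, a2 > 0 and let θ_1, …, θ_k be distributed according to the multiplicative inverse gamma prior with parameters (a1, a2). Then for every point (θ⁰_1, …, θ⁰_k) ∈ (0, ∞)^k, every k ≥ 1 and every ε > 0, one has P(∑_{h=1}^k |θ_h − θ⁰_h| < ε) > 0; that is, the prior has full support on the positive k-dimensional Euclidean space (0, ∞)^k. -/
open MeasureTheory ProbabilityTheory Real Filter Set

/-- Density of the inverse gamma distribution `Inv-Ga(a, b)`: equal to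
`b^a / Γ(a) · x^{-(a+1)} · e^{-b/x}` for `x > 0` and `0` otherwise. -/
noncomputable def invGammaPDF (a b : ℝ) (x : ℝ) : ℝ :=
  if 0 < x then b ^ a / Real.Gamma a * x ^ (-(a + 1)) * Real.exp (-b / x) else 0

/-- The inverse gamma distribution `Inv-Ga(a, b)` as a measure on `ℝ`. -/
noncomputable def invGammaMeasure (a b : ℝ) : Measure ℝ :=
  MeasureTheory.volume.withDensity (fun x => ENNReal.ofReal (invGammaPDF a b x))

lemma prod_close_aux (n : ℕ) (t : ℕ → ℝ) : ∀ ε : ℝ, 0 < ε →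
    ∃ δ > 0, ∀ x : ℕ → ℝ, (∀ l < n, |x l - t l| < δ) →
      |(∏ l ∈ Finset.range n, x l) - ∏ l ∈ Finset.range n, t l| < ε := by
  induction n with
  | zero => exact fun ε hε => ⟨1, one_pos, fun x _ => by simpa using hε⟩
  | succ n ih =>
    intro ε hε
    set P := ∏ l ∈ Finset.range n, t l with hP
    obtain ⟨δ₀, hδ₀, h₀⟩ := ih (ε / (2 * (|t n| + 1))) (by positivity)
    refine ⟨min δ₀ (min 1 (ε / (2 * (|P| + 1)))), by positivity, fun x hx => ?_⟩
    have hxn : |x n - t n| < min 1 (ε / (2 * (|P| + 1))) :=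
      lt_of_lt_of_le (hx n (Nat.lt_succ_self n)) (min_le_right _ _)
    have hxn1 : |x n - t n| < 1 := lt_of_lt_of_le hxn (min_le_left _ _)
    have hxn2 : |x n - t n| < ε / (2 * (|P| + 1)) := lt_of_lt_of_le hxn (min_le_right _ _)
    have hprev : ∀ l < n, |x l - t l| < δ₀ := fun l hl =>
      lt_of_lt_of_le (hx l (hl.trans (Nat.lt_succ_self n))) (min_le_left _ _)
    have h1 := h₀ x hprev
    set Q := ∏ l ∈ Finset.range n, x l with hQ
    have hxabs : |x n| ≤ |t n| + 1 := by
      have : |x n| ≤ |t n| + |x n - t n| := by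
        calc |x n| = |t n + (x n - t n)| := by ring_nf
        _ ≤ |t n| + |x n - t n| := abs_add_le _ _
      linarith
    have habs : |Q * x n - P * t n| ≤ |Q - P| * |x n| + |P| * |x n - t n| := by
      calc |Q * x n - P * t n| = |(Q - P) * x n + P * (x n - t n)| := by ring_nf
      _ ≤ |(Q - P) * x n| + |P * (x n - t n)| := abs_add_le _ _
      _ = |Q - P| * |x n| + |P| * |x n - t n| := by rw [abs_mul, abs_mul]
    have t1 : |Q - P| * |x n| < ε / 2 := by
      have e1 : |Q - P| * |x n| ≤ |Q - P| * (|t n| + 1) :=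
        mul_le_mul_of_nonneg_left hxabs (abs_nonneg _)
      have e2 : |Q - P| * (|t n| + 1) < (ε / (2 * (|t n| + 1))) * (|t n| + 1) :=
        mul_lt_mul_of_pos_right h1 (by positivity)
      have e3 : (ε / (2 * (|t n| + 1))) * (|t n| + 1) = ε / 2 := by
        field_simp
      linarith
    have t2 : |P| * |x n - t n| < ε / 2 := by
      have e2 : |P| * |x n - t n| < (|P| + 1) * (ε / (2 * (|P| + 1))) :=
        mul_lt_mul' (by linarith [abs_nonneg P]) hxn2 (abs_nonneg _) (by positivity)
      have e3 : (|P| + 1) * (ε / (2 * (|P| + 1))) = ε / 2 := by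
        field_simp
      linarith
    rw [Finset.prod_range_succ, Finset.prod_range_succ, ← hP, ← hQ]
    linarith

lemma invGamma_Ioo_pos (a : ℝ) (ha : 0 < a) {c d : ℝ} (hc : 0 < c) (hcd : c < d) :
    0 < invGammaMeasure a 1 (Set.Ioo c d) := by
  have hd : 0 < d := hc.trans hcd
  have hΓ : 0 < Real.Gamma a := Real.Gamma_pos_of_pos ha
  set m : ℝ := 1 / Real.Gamma a * d ^ (-(a + 1)) * Real.exp (-1 / c) with hm
  have hmpos : 0 < m := by positivity
  have hbound : ∀ x ∈ Set.Ioo c d,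
      ENNReal.ofReal m ≤ ENNReal.ofReal (invGammaPDF a 1 x) := by
    intro x hx
    apply ENNReal.ofReal_le_ofReal
    have hx0 : 0 < x := hc.trans hx.1
    rw [invGammaPDF, if_pos hx0, Real.one_rpow]
    have hrp : d ^ (-(a + 1)) ≤ x ^ (-(a + 1)) :=
      Real.rpow_le_rpow_of_nonpos hx0 hx.2.le (by linarith)
    have hexp : Real.exp (-1 / c) ≤ Real.exp (-1 / x) := by
      apply Real.exp_le_exp.mpr
      rw [neg_div, neg_div, neg_le_neg_iff]
      exact one_div_le_one_div_of_le hc hx.1.le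
    have h1 : 0 < x ^ (-(a + 1)) := Real.rpow_pos_of_pos hx0 _
    calc m ≤ 1 / Real.Gamma a * x ^ (-(a + 1)) * Real.exp (-1 / c) := by
          rw [hm]
          apply mul_le_mul_of_nonneg_right _ (Real.exp_nonneg _)
          exact mul_le_mul_of_nonneg_left hrp (by positivity)
      _ ≤ 1 / Real.Gamma a * x ^ (-(a + 1)) * Real.exp (-1 / x) := by
          apply mul_le_mul_of_nonneg_left hexp (by positivity)
  rw [invGammaMeasure, withDensity_apply _ measurableSet_Ioo]
  calc (0 : ENNReal) < ENNReal.ofReal m * volume (Set.Ioo c d) := by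
        rw [Real.volume_Ioo]
        exact ENNReal.mul_pos (by simpa using hmpos)
          (by simp [ENNReal.ofReal_pos]; linarith)
    _ = ∫⁻ _ in Set.Ioo c d, ENNReal.ofReal m ∂volume := (setLIntegral_const _ _).symm
    _ ≤ ∫⁻ x in Set.Ioo c d, ENNReal.ofReal (invGammaPDF a 1 x) ∂volume :=
        setLIntegral_mono' measurableSet_Ioo hbound

/-- the multiplicative inverse gamma prior has full support on `(0, ∞)^k`. -/
theorem multiplicative_inverse_gamma_full_support
    {Ω : Type*} [MeasureSpace Ω] [IsProbabilityMeasure (ℙ : Measure Ω)]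
    (a1 a2 : ℝ) (ha1 : 0 < a1) (ha2 : 0 < a2)
    (k : ℕ) (hk : 1 ≤ k) (ϑ : ℕ → Ω → ℝ)
    (hmeas : ∀ l, Measurable (ϑ l))
    (hindep : iIndepFun ϑ ℙ)
    (hlaw1 : Measure.map (ϑ 0) ℙ = invGammaMeasure a1 1)
    (hlaw2 : ∀ l, 1 ≤ l → Measure.map (ϑ l) ℙ = invGammaMeasure a2 1)
    (θ0 : ℕ → ℝ) (hθ0 : ∀ h, 1 ≤ h → h ≤ k → 0 < θ0 h)
    (ε : ℝ) (hε : 0 < ε) :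
    0 < ℙ {ω | ∑ h ∈ Finset.Icc 1 k, |(∏ l ∈ Finset.range h, ϑ l ω) - θ0 h| < ε} := by
  classical
  set t : ℕ → ℝ := fun l => if l = 0 then θ0 1 else θ0 (l + 1) / θ0 l with ht
  have htpos : ∀ l < k, 0 < t l := by
    intro l hl
    rcases Nat.eq_zero_or_pos l with h0 | h0
    · simp [ht, h0]; exact hθ0 1 le_rfl hk
    · have h1 : l ≠ 0 := h0.ne'
      simp only [ht, if_neg h1]
      exact div_pos (hθ0 (l + 1) (by omega) (by omega)) (hθ0 l h0 hl.le)
  have hprodt : ∀ h, 1 ≤ h → h ≤ k → ∏ l ∈ Finset.range h, t l = θ0 h := by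
    intro h h1 h2
    induction h, h1 using Nat.le_induction with
    | base => simp [ht]
    | succ n hn ih =>
      rw [Finset.prod_range_succ, ih (by omega)]
      have hn0 : (θ0 n) ≠ 0 := (hθ0 n hn (by omega)).ne'
      simp only [ht, if_neg (by omega : n ≠ 0)]
      field_simp
  have hkpos : (0 : ℝ) < k := by exact_mod_cast hk
  have hεk : 0 < ε / k := div_pos hε hkpos
  have key : ∀ h : ℕ, ∃ δ > 0, ∀ x : ℕ → ℝ, (∀ l < h, |x l - t l| < δ) →
      |(∏ l ∈ Finset.range h, x l) - ∏ l ∈ Finset.range h, t l| < ε / k :=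
    fun h => prod_close_aux h t _ hεk
  choose δf hδpos hδ using key
  have hne : (Finset.Icc 1 k).Nonempty := ⟨1, by simp [hk]⟩
  set δ : ℝ := (Finset.Icc 1 k).inf' hne δf with hδdef
  have hδ0 : 0 < δ := by
    rw [hδdef, Finset.lt_inf'_iff]
    exact fun h _ => hδpos h
  -- the intervals
  set I : ℕ → Set ℝ := fun l => Set.Ioo (max (t l - δ) (t l / 2)) (t l + δ) with hI
  -- the good event
  have hsub : (⋂ l ∈ Finset.range k, (ϑ l) ⁻¹' (I l)) ⊆
      {ω | ∑ h ∈ Finset.Icc 1 k, |(∏ l ∈ Finset.range h, ϑ l ω) - θ0 h| < ε} := by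
    intro ω hω
    simp only [Set.mem_iInter, Set.mem_preimage, Finset.mem_range] at hω
    have hclose : ∀ l < k, |ϑ l ω - t l| < δ := by
      intro l hl
      have := hω l hl
      rw [hI] at this
      have h1 : t l - δ < ϑ l ω := lt_of_le_of_lt (le_max_left _ _) this.1
      have h2 : ϑ l ω < t l + δ := this.2
      rw [abs_sub_lt_iff]; constructor <;> linarith
    have hterm : ∀ h ∈ Finset.Icc 1 k,
        |(∏ l ∈ Finset.range h, ϑ l ω) - θ0 h| < ε / k := by
      intro h hh
      rw [Finset.mem_Icc] at hh
      have hδle : δ ≤ δf h := Finset.inf'_le _ (Finset.mem_Icc.mpr hh)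
      have := hδ h (fun ω' => ϑ ω' ω) (fun l hl =>
        lt_of_lt_of_le (hclose l (lt_of_lt_of_le hl hh.2)) hδle)
      rwa [hprodt h hh.1 hh.2] at this
    have : ∑ h ∈ Finset.Icc 1 k, |(∏ l ∈ Finset.range h, ϑ l ω) - θ0 h|
        < ∑ _h ∈ Finset.Icc 1 k, ε / k := Finset.sum_lt_sum_of_nonempty hne hterm
    have hcard : ∑ _h ∈ Finset.Icc 1 k, ε / k = ε := by
      rw [Finset.sum_const, Nat.card_Icc]
      simp only [Nat.add_sub_cancel, nsmul_eq_mul]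
      field_simp
    simpa [hcard] using this
  -- positivity of each factor
  have hfac : ∀ l < k, 0 < ℙ ((ϑ l) ⁻¹' (I l)) := by
    intro l hl
    have hlow : 0 < max (t l - δ) (t l / 2) :=
      lt_of_lt_of_le (by linarith [htpos l hl]) (le_max_right _ _)
    have hlt : max (t l - δ) (t l / 2) < t l + δ := by
      rw [max_lt_iff]
      constructor <;> linarith [htpos l hl]
    have hmap : ℙ ((ϑ l) ⁻¹' (I l)) = Measure.map (ϑ l) ℙ (I l) :=
      (Measure.map_apply (hmeas l) measurableSet_Ioo).symm
    rcases Nat.eq_zero_or_pos l with h0 | h0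
    · subst h0
      rw [hmap, hlaw1]
      exact invGamma_Ioo_pos a1 ha1 hlow hlt
    · rw [hmap, hlaw2 l h0]
      exact invGamma_Ioo_pos a2 ha2 hlow hlt
  have hinter : ℙ (⋂ l ∈ Finset.range k, (ϑ l) ⁻¹' (I l))
      = ∏ l ∈ Finset.range k, ℙ ((ϑ l) ⁻¹' (I l)) :=
    hindep.meas_biInter (fun i _ => ⟨I i, measurableSet_Ioo, rfl⟩)
  have hpos : 0 < ℙ (⋂ l ∈ Finset.range k, (ϑ l) ⁻¹' (I l)) := by
    rw [hinter, pos_iff_ne_zero, Finset.prod_ne_zero_iff]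
    intro i hi
    exact (hfac i (Finset.mem_range.mp hi)).ne'
  exact lt_of_lt_of_le hpos (measure_mono hsub)
end

section
/- Let a1 ≥ a2 > 1 and let θ_1, …, θ_k (k ≥ 2) be distributed according to the multiplicative inverse gamma prior with parameters (a1, a2). Then the sequence is not stochastically decreasing: for every h ∈ {1, …, k−1} there exists θ > 0 such that P(θ_{h+1} ≤ θ) < P(θ_h ≤ θ). In particular, there exist (infinitely many) multiplicative inverse gamma priors with a2 > 1 for which the stochastic order θ_1 ⪰ θ_2 ⪰ ⋯ ⪰ θ_k fails. -/
open MeasureTheory ProbabilityTheory Real Filter Set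
open scoped ENNReal

noncomputable def Jig (b : ℝ) : ℝ≥0∞ :=
  ∫⁻ x in Ioi (0:ℝ), ENNReal.ofReal (x ^ (-(b+1)) * Real.exp (-1/x))

lemma Jig_lb {b : ℝ} (hb : 0 < b) : ENNReal.ofReal (Real.exp (-1) * (1/b)) ≤ Jig b := by
  have hp : -(b+1) < -1 := by linarith
  have hint : IntegrableOn (fun x : ℝ => x ^ (-(b+1))) (Ioi 1) := integrableOn_Ioi_rpow_of_lt hp one_pos
  have hval : ∫ x in Ioi (1:ℝ), x ^ (-(b+1)) = 1/b := by
    rw [integral_Ioi_rpow_of_lt hp one_pos, Real.one_rpow]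
    rw [show -(b+1)+1 = -b by ring, neg_div_neg_eq]
  have h1 : ENNReal.ofReal (Real.exp (-1) * (1/b)) =
      ∫⁻ x in Ioi (1:ℝ), ENNReal.ofReal (Real.exp (-1) * x ^ (-(b+1))) := by
    rw [← ofReal_integral_eq_lintegral_ofReal (hint.const_mul _)
      ((ae_restrict_iff' measurableSet_Ioi).2 (ae_of_all _ fun x hx =>
        mul_nonneg (Real.exp_pos _).le (Real.rpow_nonneg (by linarith [mem_Ioi.1 hx]) _)))]
    rw [MeasureTheory.integral_const_mul, hval]
  rw [h1]
  refine le_trans (setLIntegral_mono (by fun_prop) ?_) (lintegral_mono_set (Ioi_subset_Ioi zero_le_one))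
  intro x hx
  have h1x : (1:ℝ) < x := mem_Ioi.1 hx
  apply ENNReal.ofReal_le_ofReal
  rw [mul_comm]
  apply mul_le_mul_of_nonneg_left _ (Real.rpow_nonneg (by linarith) _)
  apply Real.exp_le_exp.2
  rw [neg_le, neg_div, neg_neg, div_le_one (by linarith)]
  exact h1x.le


lemma Jig_ub {b : ℝ} (hb : 0 < b) : Jig b < ⊤ := by
  have hp : -(b+1) < -1 := by linarith
  set m : ℕ := ⌈b + 1⌉₊ with hm
  have hbm : b + 1 ≤ (m : ℝ) := Nat.le_ceil _
  have key : ∀ x ∈ Ioc (0:ℝ) 1, x ^ (-(b+1)) * Real.exp (-1/x) ≤ (m.factorial : ℝ) := by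
    intro x hx
    obtain ⟨hx0, hx1⟩ := hx
    have h1 : x ^ (-(b+1)) ≤ x ^ (-(m:ℝ)) :=
      Real.rpow_le_rpow_of_exponent_ge hx0 hx1 (by linarith)
    have h2 : x ^ (-(m:ℝ)) * Real.exp (-1/x) ≤ (m.factorial : ℝ) := by
      have hix : 0 < 1/x := by positivity
      have hexp : (1/x) ^ m / (m.factorial : ℝ) ≤ Real.exp (1/x) := by
        refine le_trans ?_ (Real.sum_le_exp_of_nonneg hix.le (m+1))
        exact Finset.single_le_sum (f := fun i => (1/x)^i / (i.factorial : ℝ))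
          (fun i _ => by positivity) (Finset.self_mem_range_succ m)
      have hfac : (0:ℝ) < (m.factorial : ℝ) := by positivity
      have h3 : (1/x) ^ m ≤ (m.factorial : ℝ) * Real.exp (1/x) := by
        rw [div_le_iff₀ hfac] at hexp; linarith [hexp]
    -- x ^ (-(m:ℝ)) = (1/x)^m
      have h4 : x ^ (-(m:ℝ)) = (1/x) ^ m := by
        rw [Real.rpow_neg hx0.le, Real.rpow_natCast, one_div, inv_pow]
      rw [h4, neg_div, Real.exp_neg, mul_inv_le_iff₀ (Real.exp_pos _), mul_comm (m.factorial : ℝ)]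
      calc (1/x)^m ≤ (m.factorial : ℝ) * Real.exp (1/x) := h3
        _ = Real.exp (1/x) * (m.factorial:ℝ) := mul_comm _ _
    calc x ^ (-(b+1)) * Real.exp (-1/x) ≤ x ^ (-(m:ℝ)) * Real.exp (-1/x) :=
          mul_le_mul_of_nonneg_right h1 (Real.exp_pos _).le
      _ ≤ (m.factorial : ℝ) := h2
  have hsplit : Jig b = (∫⁻ x in Ioc (0:ℝ) 1, ENNReal.ofReal (x ^ (-(b+1)) * Real.exp (-1/x)))
      + ∫⁻ x in Ioi (1:ℝ), ENNReal.ofReal (x ^ (-(b+1)) * Real.exp (-1/x)) := by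
    rw [Jig, ← Set.Ioc_union_Ioi_eq_Ioi (zero_le_one)]
    exact lintegral_union measurableSet_Ioi (Set.Ioc_disjoint_Ioi le_rfl)
  rw [hsplit]
  apply ENNReal.add_lt_top.2
  constructor
  · calc (∫⁻ x in Ioc (0:ℝ) 1, ENNReal.ofReal (x ^ (-(b+1)) * Real.exp (-1/x)))
        ≤ ∫⁻ _x in Ioc (0:ℝ) 1, ENNReal.ofReal (m.factorial : ℝ) :=
          setLIntegral_mono (by fun_prop) (fun x hx => ENNReal.ofReal_le_ofReal (key x hx))
      _ = ENNReal.ofReal (m.factorial : ℝ) * volume (Ioc (0:ℝ) 1) := setLIntegral_const _ _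
      _ < ⊤ := by
          rw [Real.volume_Ioc]
          exact ENNReal.mul_lt_top ENNReal.ofReal_lt_top ENNReal.ofReal_lt_top
  · have hint : IntegrableOn (fun x : ℝ => x ^ (-(b+1))) (Ioi 1) := integrableOn_Ioi_rpow_of_lt hp one_pos
    calc (∫⁻ x in Ioi (1:ℝ), ENNReal.ofReal (x ^ (-(b+1)) * Real.exp (-1/x)))
        ≤ ∫⁻ x in Ioi (1:ℝ), ENNReal.ofReal (x ^ (-(b+1))) := by
          refine setLIntegral_mono (by fun_prop) (fun x hx => ENNReal.ofReal_le_ofReal ?_)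
          have hx0 : (0:ℝ) < x := lt_trans one_pos (mem_Ioi.1 hx)
          calc x ^ (-(b+1)) * Real.exp (-1/x) ≤ x ^ (-(b+1)) * 1 := by
                refine mul_le_mul_of_nonneg_left ?_ (Real.rpow_nonneg hx0.le _)
                rw [← Real.exp_zero]
                apply Real.exp_le_exp.2
                rw [neg_div]
                exact neg_nonpos.2 (by positivity)
            _ = x ^ (-(b+1)) := mul_one _
      _ < ⊤ := hint.lintegral_lt_top

lemma invGammaPDF_measurable (a b : ℝ) : Measurable (invGammaPDF a b) := by
  unfold invGammaPDF
  exact Measurable.ite measurableSet_Ioi (by fun_prop) measurable_const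

lemma invGamma_moment {a s : ℝ} (ha : 0 < a) (hs : 0 ≤ s) :
    ∫⁻ x, ENNReal.ofReal (x ^ s) ∂(invGammaMeasure a 1) =
      ENNReal.ofReal (Real.Gamma a)⁻¹ * Jig (a - s) := by
  rw [invGammaMeasure, lintegral_withDensity_eq_lintegral_mul _ (by
      exact (invGammaPDF_measurable a 1).ennreal_ofReal) (by fun_prop)]
  have heq : (fun x => ENNReal.ofReal (invGammaPDF a 1 x) * ENNReal.ofReal (x ^ s))
      = Set.indicator (Ioi (0:ℝ)) (fun x =>
          ENNReal.ofReal (Real.Gamma a)⁻¹ * ENNReal.ofReal (x ^ (-((a-s)+1)) * Real.exp (-1/x))) := by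
    funext x
    by_cases hx : 0 < x
    · rw [Set.indicator_of_mem (show x ∈ Ioi 0 from hx)]
      rw [invGammaPDF, if_pos hx, Real.one_rpow]
      rw [← ENNReal.ofReal_mul (by positivity), ← ENNReal.ofReal_mul (by
        positivity)]
      congr 1
      have hxne : x ≠ 0 := ne_of_gt hx
      rw [show (1:ℝ)/Real.Gamma a * x ^ (-(a+1)) * Real.exp (-1/x) * x ^ s
            = (Real.Gamma a)⁻¹ * (x ^ (-(a+1)) * x ^ s * Real.exp (-1/x)) by ring,
          ← Real.rpow_add hx]
      ring_nf
    · rw [Set.indicator_of_notMem (show x ∉ Ioi 0 from hx), invGammaPDF, if_neg hx, ENNReal.ofReal_zero, zero_mul]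
  simp only [Pi.mul_apply]
  calc ∫⁻ x, ENNReal.ofReal (invGammaPDF a 1 x) * ENNReal.ofReal (x ^ s)
      = ∫⁻ x, Set.indicator (Ioi (0:ℝ)) (fun x =>
          ENNReal.ofReal (Real.Gamma a)⁻¹ * ENNReal.ofReal (x ^ (-((a-s)+1)) * Real.exp (-1/x))) x :=
        lintegral_congr (fun x => congrFun heq x)
    _ = ∫⁻ x in Ioi (0:ℝ), ENNReal.ofReal (Real.Gamma a)⁻¹ * ENNReal.ofReal (x ^ (-((a-s)+1)) * Real.exp (-1/x)) :=
        lintegral_indicator measurableSet_Ioi _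
    _ = ENNReal.ofReal (Real.Gamma a)⁻¹ * Jig (a - s) := by
        rw [Jig, lintegral_const_mul _ (by fun_prop)]

lemma invGammaMeasure_Iic_zero (a b : ℝ) : invGammaMeasure a b (Iic 0) = 0 := by
  rw [invGammaMeasure, withDensity_apply _ measurableSet_Iic]
  rw [setLIntegral_congr_fun measurableSet_Iic (fun x hx => by
    rw [invGammaPDF, if_neg (not_lt.2 (mem_Iic.1 hx)), ENNReal.ofReal_zero])]
  simp

/-- for `a1 ≥ a2 > 1`, the multiplicative inverse gamma prior is not
stochastically decreasing: for each `h` there is `θ > 0` with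
`P(θ_{h+1} ≤ θ) < P(θ_h ≤ θ)`. -/
theorem multiplicative_inverse_gamma_not_stochastically_ordered
    {Ω : Type*} [MeasureSpace Ω] [IsProbabilityMeasure (ℙ : Measure Ω)]
    (a1 a2 : ℝ) (ha12 : a2 ≤ a1) (ha2 : 1 < a2)
    (k : ℕ) (hk : 2 ≤ k) (ϑ : ℕ → Ω → ℝ)
    (hmeas : ∀ l, Measurable (ϑ l))
    (hindep : iIndepFun ϑ ℙ)
    (hlaw1 : Measure.map (ϑ 0) ℙ = invGammaMeasure a1 1)
    (hlaw2 : ∀ l, 1 ≤ l → Measure.map (ϑ l) ℙ = invGammaMeasure a2 1) :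
    ∀ h, 1 ≤ h → h ≤ k - 1 →
      ∃ θ : ℝ, 0 < θ ∧
        ℙ {ω | (∏ l ∈ Finset.range (h + 1), ϑ l ω) ≤ θ} <
          ℙ {ω | (∏ l ∈ Finset.range h, ϑ l ω) ≤ θ} := by
  intro h hh1 _hhk
  by_contra hcon
  push_neg at hcon
  -- almost sure positivity
  have hnull : ∀ l : ℕ, ℙ {ω | ϑ l ω ≤ 0} = 0 := by
    intro l
    have hmap : ℙ (ϑ l ⁻¹' (Iic 0)) = (Measure.map (ϑ l) ℙ) (Iic 0) :=
      (Measure.map_apply (hmeas l) measurableSet_Iic).symm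
    have : (Measure.map (ϑ l) ℙ) (Iic 0) = 0 := by
      rcases Nat.eq_zero_or_pos l with hl | hl
      · rw [hl, hlaw1]; exact invGammaMeasure_Iic_zero a1 1
      · rw [hlaw2 l hl]; exact invGammaMeasure_Iic_zero a2 1
    exact hmap.trans this
  have hpos : ∀ᵐ ω ∂ℙ, ∀ l : ℕ, 0 < ϑ l ω := by
    rw [ae_all_iff]
    intro l
    rw [ae_iff]
    have hset : {ω | ¬ 0 < ϑ l ω} = {ω | ϑ l ω ≤ 0} := by
      ext ω; simp [not_lt]
    rw [hset]; exact hnull l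
  -- choice of the exponent s
  set G := Real.Gamma a2 with hGdef
  have hG : 0 < G := Real.Gamma_pos_of_pos (by linarith)
  set b := min (a2/2) (Real.exp (-1) / (2*G)) with hbdef
  have hb0 : 0 < b := lt_min (by linarith) (by positivity)
  have hba : b < a2 := lt_of_le_of_lt (min_le_left _ _) (by linarith)
  set s := a2 - b with hsdef
  have hs0 : 0 < s := by simp only [hsdef]; linarith
  have hφ : Measurable fun x : ℝ => ENNReal.ofReal (x ^ s) := by fun_prop
  -- moments of the individual factors
  have hmom : ∀ (l : ℕ) (a : ℝ), 0 < a → Measure.map (ϑ l) ℙ = invGammaMeasure a 1 →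
      ∫⁻ ω, ENNReal.ofReal ((ϑ l ω) ^ s) ∂ℙ = ENNReal.ofReal (Real.Gamma a)⁻¹ * Jig (a - s) := by
    intro l a ha hlaw
    rw [← invGamma_moment ha hs0.le, ← hlaw, lintegral_map hφ (hmeas l)]
  have hMpos : ∀ a : ℝ, a2 ≤ a →
      0 < ENNReal.ofReal (Real.Gamma a)⁻¹ * Jig (a - s) ∧
      ENNReal.ofReal (Real.Gamma a)⁻¹ * Jig (a - s) < ⊤ := by
    intro a haa
    have has : 0 < a - s := by simp only [hsdef]; linarith
    have hGa : 0 < Real.Gamma a := Real.Gamma_pos_of_pos (by linarith)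
    constructor
    · apply ENNReal.mul_pos
      · simp [ENNReal.ofReal_pos.2 (inv_pos.2 hGa)]
        positivity
      · refine ne_of_gt (lt_of_lt_of_le ?_ (Jig_lb has))
        apply ENNReal.ofReal_pos.2
        positivity
    · exact ENNReal.mul_lt_top ENNReal.ofReal_lt_top (Jig_ub has)
  -- the moment sequence
  set En : ℕ → ℝ≥0∞ := fun n => ∫⁻ ω, ENNReal.ofReal ((∏ l ∈ Finset.range n, ϑ l ω) ^ s) ∂ℙ
    with hEndef
  set M2 : ℝ≥0∞ := ENNReal.ofReal (Real.Gamma a2)⁻¹ * Jig (a2 - s) with hM2def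
  have hstep : ∀ n : ℕ, 1 ≤ n → En (n + 1) = En n * M2 := by
    intro n hn
    have hXmeas : Measurable (∏ l ∈ Finset.range n, ϑ l) := by
      rw [Finset.prod_fn]
      exact Finset.measurable_prod _ (fun l _ => hmeas l)
    have hI : IndepFun (∏ l ∈ Finset.range n, ϑ l) (ϑ n) ℙ :=
      hindep.indepFun_prod_range_succ hmeas n
    have hI2 : IndepFun ((fun x : ℝ => ENNReal.ofReal (x ^ s)) ∘ (∏ l ∈ Finset.range n, ϑ l))
        ((fun x : ℝ => ENNReal.ofReal (x ^ s)) ∘ (ϑ n)) ℙ := hI.comp hφ hφ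
    have hmul := lintegral_mul_eq_lintegral_mul_lintegral_of_indepFun
      (hφ.comp hXmeas) (hφ.comp (hmeas n)) hI2
    have hae : (fun ω => ENNReal.ofReal ((∏ l ∈ Finset.range (n+1), ϑ l ω) ^ s))
        =ᵐ[ℙ] (((fun x : ℝ => ENNReal.ofReal (x ^ s)) ∘ (∏ l ∈ Finset.range n, ϑ l)) *
               ((fun x : ℝ => ENNReal.ofReal (x ^ s)) ∘ (ϑ n))) := by
      filter_upwards [hpos] with ω hω
      have hprod : (0:ℝ) ≤ ∏ l ∈ Finset.range n, ϑ l ω :=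
        Finset.prod_nonneg (fun l _ => (hω l).le)
      simp only [Pi.mul_apply, Function.comp_apply, Finset.prod_apply]
      rw [Finset.prod_range_succ, Real.mul_rpow hprod (hω n).le,
        ENNReal.ofReal_mul (Real.rpow_nonneg hprod s)]
    calc En (n+1) = ∫⁻ ω, (((fun x : ℝ => ENNReal.ofReal (x ^ s)) ∘ (∏ l ∈ Finset.range n, ϑ l)) *
               ((fun x : ℝ => ENNReal.ofReal (x ^ s)) ∘ (ϑ n))) ω ∂ℙ := lintegral_congr_ae hae
      _ = (∫⁻ ω, ((fun x : ℝ => ENNReal.ofReal (x ^ s)) ∘ (∏ l ∈ Finset.range n, ϑ l)) ω ∂ℙ) *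
          ∫⁻ ω, ((fun x : ℝ => ENNReal.ofReal (x ^ s)) ∘ (ϑ n)) ω ∂ℙ := hmul
      _ = En n * M2 := by
          congr 1
          · apply lintegral_congr; intro ω
            simp [Finset.prod_apply]
          · simpa using hmom n a2 (by linarith) (hlaw2 n hn)
  have hE1 : En 1 = ENNReal.ofReal (Real.Gamma a1)⁻¹ * Jig (a1 - s) := by
    have : En 1 = ∫⁻ ω, ENNReal.ofReal ((ϑ 0 ω) ^ s) ∂ℙ := by
      apply lintegral_congr; intro ω; rw [Finset.prod_range_one]
    rw [this, hmom 0 a1 (by linarith) hlaw1]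
  have hbounds : ∀ n : ℕ, 1 ≤ n → 0 < En n ∧ En n < ⊤ := by
    intro n hn
    induction n, hn using Nat.le_induction with
    | base => rw [hE1]; exact hMpos a1 ha12
    | succ n hn ih =>
        rw [hstep n hn]
        obtain ⟨h1, h2⟩ := ih
        obtain ⟨h3, h4⟩ := hMpos a2 le_rfl
        exact ⟨ENNReal.mul_pos h1.ne' h3.ne', ENNReal.mul_lt_top h2 h4⟩
  -- tail comparison from the assumed CDF ordering
  have hXmeas : Measurable fun ω => ∏ l ∈ Finset.range h, ϑ l ω :=
    Finset.measurable_prod _ (fun l _ => hmeas l)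
  have hXYmeas : Measurable fun ω => ∏ l ∈ Finset.range (h+1), ϑ l ω :=
    Finset.measurable_prod _ (fun l _ => hmeas l)
  have htail : ∀ θ : ℝ, 0 < θ →
      ℙ {ω | θ < ∏ l ∈ Finset.range (h+1), ϑ l ω} ≤ ℙ {ω | θ < ∏ l ∈ Finset.range h, ϑ l ω} := by
    intro θ hθ
    have hc1 : {ω | θ < ∏ l ∈ Finset.range (h+1), ϑ l ω}
        = {ω | (∏ l ∈ Finset.range (h+1), ϑ l ω) ≤ θ}ᶜ := by ext ω; simp [not_le]
    have hc2 : {ω | θ < ∏ l ∈ Finset.range h, ϑ l ω}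
        = {ω | (∏ l ∈ Finset.range h, ϑ l ω) ≤ θ}ᶜ := by ext ω; simp [not_le]
    rw [hc1, hc2, prob_compl_eq_one_sub (measurableSet_le hXYmeas measurable_const),
      prob_compl_eq_one_sub (measurableSet_le hXmeas measurable_const)]
    exact tsub_le_tsub_left (hcon θ hθ) 1
  -- layer cake
  have hlc : ∀ n : ℕ, En n = ∫⁻ t in Ioi (0:ℝ), ℙ {ω | t < (∏ l ∈ Finset.range n, ϑ l ω) ^ s} := by
    intro n
    refine lintegral_eq_lintegral_meas_lt ℙ ?_ ?_
    · filter_upwards [hpos] with ω hω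
      exact Real.rpow_nonneg (Finset.prod_nonneg (fun l _ => (hω l).le)) s
    · exact ((by fun_prop : Measurable fun x : ℝ => x ^ s).comp
        (Finset.measurable_prod _ (fun l _ => hmeas l))).aemeasurable
  have hmono : En (h+1) ≤ En h := by
    rw [hlc (h+1), hlc h]
    refine lintegral_mono_ae ((ae_restrict_iff' measurableSet_Ioi).2 (ae_of_all _ fun t ht => ?_))
    have ht0 : 0 < t := mem_Ioi.1 ht
    have hθ : 0 < t ^ s⁻¹ := Real.rpow_pos_of_pos ht0 _
    have heq : ∀ n : ℕ, ℙ {ω | t < (∏ l ∈ Finset.range n, ϑ l ω) ^ s}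
        = ℙ {ω | t ^ s⁻¹ < ∏ l ∈ Finset.range n, ϑ l ω} := by
      intro n
      apply measure_congr
      rw [Filter.eventuallyEq_set]
      filter_upwards [hpos] with ω hω
      have hZ : (0:ℝ) ≤ ∏ l ∈ Finset.range n, ϑ l ω :=
        Finset.prod_nonneg (fun l _ => (hω l).le)
      exact (Real.rpow_inv_lt_iff_of_pos ht0.le hZ hs0).symm
    rw [heq (h+1), heq h]
    exact htail _ hθ
  -- contradiction
  have hM2gt1 : 1 < M2 := by
    have hJig : ENNReal.ofReal G < Jig b := by
      refine lt_of_lt_of_le ?_ (Jig_lb hb0)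
      apply ENNReal.ofReal_lt_ofReal_iff_of_nonneg hG.le |>.2
      have hble : b ≤ Real.exp (-1) / (2*G) := min_le_right _ _
      have h2Gb : 2*G*b ≤ Real.exp (-1) := by
        calc 2*G*b ≤ 2*G*(Real.exp (-1) / (2*G)) :=
              mul_le_mul_of_nonneg_left hble (by positivity)
          _ = Real.exp (-1) := by field_simp
      have : 2*G ≤ Real.exp (-1) * (1/b) := by
        rw [mul_one_div, le_div_iff₀ hb0]
        linarith
      linarith
    have hbeq : a2 - s = b := by simp [hsdef]
    rw [hM2def, hbeq]
    calc (1:ℝ≥0∞) = ENNReal.ofReal ((Real.Gamma a2)⁻¹) * ENNReal.ofReal G := by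
          rw [← ENNReal.ofReal_mul (by positivity), show (Real.Gamma a2)⁻¹ * G = 1 by
            rw [hGdef]; exact inv_mul_cancel₀ (by rw [← hGdef]; exact hG.ne'), ENNReal.ofReal_one]
      _ < ENNReal.ofReal ((Real.Gamma a2)⁻¹) * Jig b := by
          refine ENNReal.mul_lt_mul_right ?_ ?_ hJig
          · exact (ENNReal.ofReal_pos.2 (by positivity)).ne'
          · exact ENNReal.ofReal_ne_top
  obtain ⟨hEpos, hEfin⟩ := hbounds h hh1
  have hlt : En h < En (h+1) := by
    rw [hstep h hh1]
    calc En h = En h * 1 := (mul_one _).symm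
      _ < En h * M2 := ENNReal.mul_lt_mul_right hEpos.ne' hEfin.ne hM2gt1
  exact absurd (lt_of_lt_of_le hlt hmono) (lt_irrefl _)
end

section
/- For every a > 0 and every c > 0, the ratio of the density of a product of two independent inverse gammas (scaled by c) to the density of Inv-Ga(a, c) diverges at zero: the function θ ↦ (1/Γ(a)) · e^{c/θ} · ∫_0^∞ x^{−1} · e^{−c/x − x/θ} dx tends to +∞ as θ → 0⁺. In particular this ratio eventually exceeds 1 near 0. -/
open MeasureTheory Real Filter Set

lemma dr_cont (c θ : ℝ) : ContinuousOn (fun x : ℝ => x⁻¹ * Real.exp (-c / x - x / θ)) (Ioi 0) := by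
  have h1 : ContinuousOn (fun x : ℝ => x⁻¹) (Ioi 0) :=
    continuousOn_inv₀.mono fun x hx => ne_of_gt hx
  have h2 : ContinuousOn (fun x : ℝ => -c / x - x / θ) (Ioi 0) :=
    (continuousOn_const.div continuousOn_id fun x hx => ne_of_gt hx).sub
      (continuousOn_id.div_const θ)
  exact h1.mul (Real.continuous_exp.comp_continuousOn h2)

lemma dr_int (c θ : ℝ) (hc : 0 < c) (hθ : 0 < θ) :
    IntegrableOn (fun x : ℝ => x⁻¹ * Real.exp (-c / x - x / θ)) (Ioi 0) := by
  have hθi : (0:ℝ) < θ⁻¹ := by positivity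
  have hmaj : IntegrableOn (fun x : ℝ => (1/c) * Real.exp (-θ⁻¹ * x)) (Ioi 0) :=
    (exp_neg_integrableOn_Ioi 0 hθi).const_mul _
  refine hmaj.mono' ((dr_cont c θ).aestronglyMeasurable measurableSet_Ioi) ?_
  rw [ae_restrict_iff' measurableSet_Ioi]
  refine ae_of_all _ fun x hx => ?_
  have hx0 : (0:ℝ) < x := hx
  have hexp : Real.exp (-c / x) ≤ x / c := by
    have h1 : c / x ≤ Real.exp (c / x) := by
      have := Real.add_one_le_exp (c / x); linarith
    have h2 : Real.exp (-c / x) = (Real.exp (c / x))⁻¹ := by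
      rw [neg_div, Real.exp_neg]
    rw [h2, ← one_div]
    rw [div_le_div_iff₀ (Real.exp_pos _) hc]
    calc (1:ℝ) * c = (c / x) * x := by field_simp
    _ ≤ Real.exp (c / x) * x := mul_le_mul_of_nonneg_right h1 hx0.le
    _ = x * Real.exp (c / x) := mul_comm _ _
  have key : x⁻¹ * Real.exp (-c / x - x / θ) ≤ (1/c) * Real.exp (-θ⁻¹ * x) := by
    have hsplit : Real.exp (-c / x - x / θ) = Real.exp (-c / x) * Real.exp (-(x / θ)) := by
      rw [← Real.exp_add]; ring_nf
    have h3 : x⁻¹ * Real.exp (-c / x) ≤ 1 / c := by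
      calc x⁻¹ * Real.exp (-c / x) ≤ x⁻¹ * (x / c) :=
            mul_le_mul_of_nonneg_left hexp (by positivity)
      _ = 1 / c := by field_simp
    calc x⁻¹ * Real.exp (-c / x - x / θ)
        = (x⁻¹ * Real.exp (-c / x)) * Real.exp (-(x / θ)) := by rw [hsplit]; ring
      _ ≤ (1/c) * Real.exp (-(x / θ)) :=
          mul_le_mul_of_nonneg_right h3 (Real.exp_pos _).le
      _ = (1/c) * Real.exp (-θ⁻¹ * x) := by congr 1; ring
  calc ‖x⁻¹ * Real.exp (-c / x - x / θ)‖ = x⁻¹ * Real.exp (-c / x - x / θ) := by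
        rw [Real.norm_eq_abs, abs_of_nonneg (by positivity)]
  _ ≤ (1/c) * Real.exp (-θ⁻¹ * x) := key

lemma dr_lower (a c : ℝ) (ha : 0 < a) (hc : 0 < c) (θ : ℝ) (hθ : 0 < θ) :
    1 / (2 * Real.Gamma a) * Real.exp (c / θ - (c + 2) / Real.sqrt θ) ≤
    1 / Real.Gamma a * Real.exp (c / θ) *
      ∫ x in Set.Ioi (0 : ℝ), x⁻¹ * Real.exp (-c / x - x / θ) := by
  have hΓ : 0 < Real.Gamma a := Real.Gamma_pos_of_pos ha
  set s := Real.sqrt θ with hs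
  have hs0 : 0 < s := Real.sqrt_pos.mpr hθ
  have hss : s * s = θ := Real.mul_self_sqrt hθ.le
  have hint := dr_int c θ hc hθ
  have hsub : Ioc s (2*s) ⊆ Ioi (0:ℝ) := fun x hx => lt_trans hs0 hx.1
  -- constant lower bound on the small interval
  have hconst : ∀ x ∈ Ioc s (2*s),
      (2*s)⁻¹ * Real.exp (-(c+2) / s) ≤ x⁻¹ * Real.exp (-c / x - x / θ) := by
    intro x hx
    have hx0 : 0 < x := lt_trans hs0 hx.1
    have h1 : (2*s)⁻¹ ≤ x⁻¹ := by
      apply inv_anti₀ hx0 hx.2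
    have h2 : -(c+2) / s ≤ -c / x - x / θ := by
      have ha1 : c / x ≤ c / s := by
        apply div_le_div_of_nonneg_left hc.le hs0 hx.1.le
      have ha2 : x / θ ≤ 2 / s := by
        rw [← hss]
        rw [div_le_div_iff₀ (by positivity) hs0]
        nlinarith [hx.2]
      have : -(c+2)/s = -(c/s) - 2/s := by ring
      rw [this, neg_div]
      linarith
    exact mul_le_mul h1 (Real.exp_le_exp.mpr h2) (Real.exp_pos _).le (by positivity)
  have hmeas : volume (Ioc s (2*s)) = ENNReal.ofReal s := by
    rw [Real.volume_Ioc]; congr 1; ring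
  have h2 : (2*s)⁻¹ * Real.exp (-(c+2) / s) * (volume (Ioc s (2*s))).toReal ≤
      ∫ x in Ioc s (2*s), x⁻¹ * Real.exp (-c / x - x / θ) :=
    setIntegral_ge_of_const_le_real measurableSet_Ioc
      (by rw [hmeas]; exact ENNReal.ofReal_ne_top) hconst (hint.mono_set hsub)
  have h1 : (∫ x in Ioc s (2*s), x⁻¹ * Real.exp (-c / x - x / θ)) ≤
      ∫ x in Ioi (0:ℝ), x⁻¹ * Real.exp (-c / x - x / θ) := by
    refine setIntegral_mono_set hint ?_ (HasSubset.Subset.eventuallyLE hsub)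
    have hnn : ∀ᵐ x ∂(volume.restrict (Ioi (0:ℝ))), 0 ≤ x⁻¹ * Real.exp (-c / x - x / θ) :=
      (ae_restrict_iff' measurableSet_Ioi).mpr (ae_of_all _ fun x hx => by
        have hx0 : (0:ℝ) < x := hx; positivity)
    exact hnn
  have hvol : (volume (Ioc s (2*s))).toReal = s := by
    rw [hmeas, ENNReal.toReal_ofReal hs0.le]
  have hlow : (1/2) * Real.exp (-(c+2) / s) ≤
      ∫ x in Ioi (0:ℝ), x⁻¹ * Real.exp (-c / x - x / θ) := by
    have : (2*s)⁻¹ * Real.exp (-(c+2) / s) * s = (1/2) * Real.exp (-(c+2) / s) := by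
      field_simp
    rw [← this]
    calc (2*s)⁻¹ * Real.exp (-(c+2) / s) * s
        = (2*s)⁻¹ * Real.exp (-(c+2) / s) * (volume (Ioc s (2*s))).toReal := by rw [hvol]
      _ ≤ _ := le_trans h2 h1
  have heq : 1 / (2 * Real.Gamma a) * Real.exp (c / θ - (c + 2) / s)
      = (1 / Real.Gamma a * Real.exp (c / θ)) * ((1/2) * Real.exp (-(c+2) / s)) := by
    rw [sub_eq_add_neg, Real.exp_add, neg_div]
    field_simp
  rw [heq]
  have hpos : 0 ≤ 1 / Real.Gamma a * Real.exp (c / θ) := by positivity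
  exact mul_le_mul_of_nonneg_left hlow hpos

/-- the ratio `(1/Γ(a)) e^{c/θ} ∫_0^∞ x⁻¹ e^{-c/x - x/θ} dx` tends to `+∞`
as `θ → 0⁺`; in particular it eventually exceeds `1` near `0`. -/
theorem density_ratio_tendsto_atTop (a c : ℝ) (ha : 0 < a) (hc : 0 < c) :
    Tendsto
      (fun θ : ℝ => 1 / Real.Gamma a * Real.exp (c / θ) *
        ∫ x in Set.Ioi (0 : ℝ), x⁻¹ * Real.exp (-c / x - x / θ))
      (nhdsWithin 0 (Set.Ioi 0)) atTop ∧
    ∀ᶠ θ : ℝ in nhdsWithin 0 (Set.Ioi 0),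
      1 < 1 / Real.Gamma a * Real.exp (c / θ) *
        ∫ x in Set.Ioi (0 : ℝ), x⁻¹ * Real.exp (-c / x - x / θ) := by
  have hΓ : 0 < Real.Gamma a := Real.Gamma_pos_of_pos ha
  -- the exponent tends to atTop
  have hexp : Tendsto (fun θ : ℝ => c / θ - (c + 2) / Real.sqrt θ)
      (nhdsWithin 0 (Set.Ioi 0)) atTop := by
    have htop : Tendsto (fun θ : ℝ => (c/2) * θ⁻¹) (nhdsWithin 0 (Set.Ioi 0)) atTop :=
      tendsto_inv_nhdsGT_zero.const_mul_atTop (by positivity)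
    refine tendsto_atTop_mono' _ ?_ htop
    have hδ : (0:ℝ) < (c / (2*(c+2)))^2 := by positivity
    filter_upwards [Ioo_mem_nhdsGT_of_mem (by constructor <;> [exact le_refl 0; exact hδ])]
      with θ hθ
    obtain ⟨hθ0, hθδ⟩ := hθ
    set s := Real.sqrt θ with hsdef
    have hs0 : 0 < s := Real.sqrt_pos.mpr hθ0
    have hss : s * s = θ := Real.mul_self_sqrt hθ0.le
    have hsle : s < c / (2*(c+2)) := by
      have := Real.sqrt_lt_sqrt hθ0.le hθδ
      rwa [Real.sqrt_sq (by positivity)] at this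
    have hkey : (c+2) * s ≤ c / 2 := by
      have h1 : (c+2) * s ≤ (c+2) * (c / (2*(c+2))) :=
        mul_le_mul_of_nonneg_left hsle.le (by positivity)
      have h2 : (c+2) * (c / (2*(c+2))) = c / 2 := by field_simp
      linarith
    -- want : (c/2) * θ⁻¹ ≤ c/θ - (c+2)/s
    have e1 : (c+2)/s = ((c+2)*s)/θ := by
      rw [← hss]; field_simp
    rw [e1]
    have e2 : (c/2) * θ⁻¹ = (c/2)/θ := by ring
    rw [e2, ← sub_div]
    gcongr
    linarith
  -- main tendsto
  have hg : Tendsto (fun θ : ℝ => 1 / (2 * Real.Gamma a) *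
      Real.exp (c / θ - (c + 2) / Real.sqrt θ)) (nhdsWithin 0 (Set.Ioi 0)) atTop :=
    (Real.tendsto_exp_atTop.comp hexp).const_mul_atTop (by positivity)
  have hmain : Tendsto
      (fun θ : ℝ => 1 / Real.Gamma a * Real.exp (c / θ) *
        ∫ x in Set.Ioi (0 : ℝ), x⁻¹ * Real.exp (-c / x - x / θ))
      (nhdsWithin 0 (Set.Ioi 0)) atTop := by
    refine tendsto_atTop_mono' _ ?_ hg
    filter_upwards [self_mem_nhdsWithin] with θ hθ
    exact dr_lower a c ha hc θ hθ
  exact ⟨hmain, hmain.eventually (eventually_gt_atTop 1)⟩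
end

section
/- For every a1 > 0 and a2 > 0, the function θ ↦ (1/Γ(a2)) · θ^{a1−a2} · e^{1/θ} · ∫_0^∞ x^{−(a1−a2+1)} · e^{−1/x − x/θ} dx tends to +∞ as θ → 0⁺. In particular, the ratio of the density of the product of independent Inv-Ga(a1, 1) and Inv-Ga(a2, 1) random variables to the density of Inv-Ga(a1, 1) eventually exceeds 1 near 0. -/
open MeasureTheory Real Filter Set

lemma dr_bound_aux (p : ℝ) {θ : ℝ} (hθ : 0 < θ) :
    ∃ M : ℝ, ∀ x ∈ Set.Ioi (0:ℝ),
      x ^ p * Real.exp (-1/x - x/θ) ≤ M * Real.exp (-(1/(2*θ)) * x) := by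
  set n : ℕ := ⌈|p|⌉₊ with hn
  have hpn : |p| ≤ (n : ℝ) := Nat.le_ceil _
  have hfac : (0:ℝ) < n.factorial := by positivity
  refine ⟨(n.factorial : ℝ) * max 1 ((2*θ)^n), fun x hx => ?_⟩
  have hx0 : (0:ℝ) < x := hx
  have key : x ^ p * Real.exp (-1/x) * Real.exp (-(x/(2*θ)))
      ≤ (n.factorial : ℝ) * max 1 ((2*θ)^n) := by
    rcases le_total x 1 with hx1 | hx1
    · have h1 : x ^ p ≤ x ^ (-(n:ℝ)) := by
        apply Real.rpow_le_rpow_of_exponent_ge hx0 hx1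
        have := neg_abs_le p; linarith
      have h2 : Real.exp (-1/x) ≤ (n.factorial : ℝ) * x ^ n := by
        have hb : ((n.factorial : ℝ) * x ^ n)⁻¹ ≤ Real.exp (1/x) := by
          calc ((n.factorial : ℝ) * x ^ n)⁻¹ = (1/x) ^ n / n.factorial := by
                rw [div_pow, one_pow]; field_simp
            _ ≤ Real.exp (1/x) := Real.pow_div_factorial_le_exp _ (by positivity) n
        have h := inv_anti₀ (by positivity : (0:ℝ) < ((n.factorial : ℝ) * x ^ n)⁻¹) hb
        rw [inv_inv] at h
        rw [neg_div, Real.exp_neg]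
        exact h
      calc x ^ p * Real.exp (-1/x) * Real.exp (-(x/(2*θ)))
          ≤ x ^ (-(n:ℝ)) * ((n.factorial : ℝ) * x ^ n) * 1 := by
            have he1 : Real.exp (-(x/(2*θ))) ≤ 1 :=
              Real.exp_le_one_iff.2 (neg_nonpos.2 (by positivity))
            gcongr
        _ = (n.factorial : ℝ) := by
            rw [Real.rpow_neg hx0.le, Real.rpow_natCast, mul_one]
            field_simp
        _ ≤ (n.factorial : ℝ) * max 1 ((2*θ)^n) :=
            le_mul_of_one_le_right hfac.le (le_max_left _ _)
    · have h1 : x ^ p ≤ x ^ (n:ℝ) :=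
        Real.rpow_le_rpow_of_exponent_le hx1 ((le_abs_self p).trans hpn)
      have h3 : Real.exp (-(x/(2*θ))) ≤ (n.factorial : ℝ) * (2*θ)^n * (x ^ n)⁻¹ := by
        have hb : ((n.factorial : ℝ) * (2*θ)^n * (x ^ n)⁻¹)⁻¹ ≤ Real.exp (x/(2*θ)) := by
          calc ((n.factorial : ℝ) * (2*θ)^n * (x ^ n)⁻¹)⁻¹ = (x/(2*θ)) ^ n / n.factorial := by
                rw [div_pow]; field_simp
            _ ≤ Real.exp (x/(2*θ)) := Real.pow_div_factorial_le_exp _ (by positivity) n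
        have h := inv_anti₀
          (by positivity : (0:ℝ) < ((n.factorial : ℝ) * (2*θ)^n * (x ^ n)⁻¹)⁻¹) hb
        rw [inv_inv] at h
        rw [Real.exp_neg]
        exact h
      calc x ^ p * Real.exp (-1/x) * Real.exp (-(x/(2*θ)))
          ≤ x ^ (n:ℝ) * 1 * ((n.factorial : ℝ) * (2*θ)^n * (x ^ n)⁻¹) := by
            have he1 : Real.exp (-1/x) ≤ 1 := by
              rw [neg_div]
              exact Real.exp_le_one_iff.2 (neg_nonpos.2 (by positivity))
            gcongr
        _ = (n.factorial : ℝ) * (2*θ)^n := by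
            rw [Real.rpow_natCast, mul_one]
            field_simp
        _ ≤ (n.factorial : ℝ) * max 1 ((2*θ)^n) := by
            rw [mul_le_mul_iff_right₀ hfac]; exact le_max_right _ _
  have hsplit : Real.exp (-1/x - x/θ)
      = Real.exp (-1/x) * Real.exp (-(x/(2*θ))) * Real.exp (-(1/(2*θ)) * x) := by
    rw [← Real.exp_add, ← Real.exp_add]
    congr 1
    field_simp
    ring
  rw [hsplit, ← mul_assoc, ← mul_assoc]
  exact mul_le_mul_of_nonneg_right key (Real.exp_pos _).le

lemma dr_integrable_aux (p : ℝ) {θ : ℝ} (hθ : 0 < θ) :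
    IntegrableOn (fun x => x ^ p * Real.exp (-1/x - x/θ)) (Set.Ioi (0:ℝ)) := by
  obtain ⟨M, hM⟩ := dr_bound_aux p hθ
  have hg : IntegrableOn (fun x => M * Real.exp (-(1/(2*θ)) * x)) (Set.Ioi (0:ℝ)) :=
    (exp_neg_integrableOn_Ioi 0 (div_pos one_pos (by linarith))).const_mul M
  have hmeas : AEStronglyMeasurable (fun x => x ^ p * Real.exp (-1/x - x/θ))
      (volume.restrict (Set.Ioi (0:ℝ))) := by
    apply ContinuousOn.aestronglyMeasurable _ measurableSet_Ioi
    apply ContinuousOn.mul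
    · exact fun x hx => (Real.continuousAt_rpow_const x p (Or.inl (ne_of_gt hx))).continuousWithinAt
    · apply Real.continuous_exp.comp_continuousOn
      apply ContinuousOn.sub
      · exact continuousOn_const.div continuousOn_id fun x hx => ne_of_gt hx
      · exact continuousOn_id.div_const θ
  apply Integrable.mono' hg hmeas
  refine (ae_restrict_iff' measurableSet_Ioi).2 (ae_of_all _ fun x hx => ?_)
  have hx0 : (0:ℝ) < x := hx
  rw [Real.norm_of_nonneg (by positivity)]
  exact hM x hx

lemma dr_integral_lower (p : ℝ) {θ : ℝ} (hθ : 0 < θ) :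
    min 1 (2 ^ p) * (θ ^ ((1:ℝ)/2)) ^ p * Real.exp (-(3 / θ ^ ((1:ℝ)/2))) * θ ^ ((1:ℝ)/2)
      ≤ ∫ x in Set.Ioi (0:ℝ), x ^ p * Real.exp (-1/x - x/θ) := by
  set s : ℝ := θ ^ ((1:ℝ)/2) with hs
  have hs0 : 0 < s := Real.rpow_pos_of_pos hθ _
  have hss : s * s = θ := by
    rw [hs, ← Real.rpow_add hθ]; norm_num
  have hsub : Set.Ioc s (2*s) ⊆ Set.Ioi (0:ℝ) := fun x hx => lt_trans hs0 hx.1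
  have hint := dr_integrable_aux p hθ
  have hnn : (0:ℝ→ℝ) ≤ᵐ[volume.restrict (Set.Ioi (0:ℝ))]
      fun x => x ^ p * Real.exp (-1/x - x/θ) := by
    refine (ae_restrict_iff' measurableSet_Ioi).2 (ae_of_all _ fun x hx => ?_)
    have hx0 : (0:ℝ) < x := hx
    simp only [Pi.zero_apply]
    positivity
  have hconst : ∀ x ∈ Set.Ioc s (2*s),
      min 1 (2 ^ p) * s ^ p * Real.exp (-(3/s)) ≤ x ^ p * Real.exp (-1/x - x/θ) := by
    intro x hx
    have hxs : s < x := hx.1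
    have hx2s : x ≤ 2*s := hx.2
    have hx0 : 0 < x := lt_trans hs0 hxs
    have h1 : min 1 (2 ^ p) * s ^ p ≤ x ^ p := by
      rcases le_total 0 p with hp | hp
      · calc min 1 (2 ^ p) * s ^ p ≤ 1 * s ^ p :=
              mul_le_mul_of_nonneg_right (min_le_left _ _) (Real.rpow_nonneg hs0.le p)
          _ = s ^ p := one_mul _
          _ ≤ x ^ p := Real.rpow_le_rpow hs0.le hxs.le hp
      · calc min 1 (2 ^ p) * s ^ p ≤ 2 ^ p * s ^ p :=
              mul_le_mul_of_nonneg_right (min_le_right _ _) (Real.rpow_nonneg hs0.le p)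
          _ = (2*s) ^ p := (Real.mul_rpow (by norm_num) hs0.le).symm
          _ ≤ x ^ p := Real.rpow_le_rpow_of_nonpos hx0 hx2s hp
    have h2 : Real.exp (-(3/s)) ≤ Real.exp (-1/x - x/θ) := by
      apply Real.exp_le_exp.2
      have ha : 1/x ≤ 1/s := one_div_le_one_div_of_le hs0 hxs.le
      have hb : x/θ ≤ 2/s := by
        rw [← hss, div_le_div_iff₀ (by positivity) hs0]
        nlinarith
      have hc : 3/s = 1/s + 2/s := by ring
      rw [neg_div]
      linarith
    exact mul_le_mul h1 h2 (Real.exp_pos _).le (Real.rpow_nonneg hx0.le p)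
  have step1 : min 1 (2 ^ p) * s ^ p * Real.exp (-(3/s)) * s
      ≤ ∫ x in Set.Ioc s (2*s), x ^ p * Real.exp (-1/x - x/θ) := by
    have hvol : (volume (Set.Ioc s (2*s))).toReal = s := by
      rw [Real.volume_Ioc, ENNReal.toReal_ofReal (by linarith)]
      ring
    have := setIntegral_ge_of_const_le_real measurableSet_Ioc
      (by rw [Real.volume_Ioc]; exact ENNReal.ofReal_ne_top) hconst (hint.mono_set hsub)
    rw [measureReal_def, hvol] at this
    linarith
  refine step1.trans ?_
  exact setIntegral_mono_set hint hnn (HasSubset.Subset.eventuallyLE hsub)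

lemma dr_G_tendsto (q : ℝ) :
    Tendsto (fun t : ℝ => t ^ (-q) * Real.exp (t - 3 * t ^ ((1:ℝ)/2))) atTop atTop := by
  refine tendsto_atTop_mono' atTop ?_ (tendsto_exp_mul_div_rpow_atTop q (1/2) one_half_pos)
  filter_upwards [eventually_ge_atTop (36:ℝ), eventually_gt_atTop (0:ℝ)] with t h36 ht0
  have h6 : (6:ℝ) ≤ t ^ ((1:ℝ)/2) := by
    have h62 : ((6:ℝ)^(2:ℕ)) ^ ((1:ℝ)/2) = 6 := by
      rw [← Real.rpow_natCast 6 2, ← Real.rpow_mul (by norm_num)]; norm_num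
    calc (6:ℝ) = ((6:ℝ)^(2:ℕ)) ^ ((1:ℝ)/2) := h62.symm
      _ ≤ t ^ ((1:ℝ)/2) := by
          apply Real.rpow_le_rpow (by norm_num) (by norm_num; linarith) (by norm_num)
  have hts : t ^ ((1:ℝ)/2) * t ^ ((1:ℝ)/2) = t := by
    rw [← Real.rpow_add ht0]; norm_num
  have harg : (1/2)*t ≤ t - 3 * t ^ ((1:ℝ)/2) := by nlinarith
  rw [div_eq_inv_mul, Real.rpow_neg ht0.le]
  exact mul_le_mul_of_nonneg_left (Real.exp_le_exp.2 harg) (by positivity)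

/-- the ratio
`(1/Γ(a2)) θ^{a1-a2} e^{1/θ} ∫_0^∞ x^{-(a1-a2+1)} e^{-1/x - x/θ} dx` (the ratio of the
density of a product of independent `Inv-Ga(a1,1)` and `Inv-Ga(a2,1)` variables to the
density of `Inv-Ga(a1,1)`) tends to `+∞` as `θ → 0⁺`; in particular it eventually
exceeds `1` near `0`. -/
theorem density_ratio_first_level_tendsto_atTop (a1 a2 : ℝ) (ha1 : 0 < a1) (ha2 : 0 < a2) :
    Tendsto
      (fun θ : ℝ => 1 / Real.Gamma a2 * θ ^ (a1 - a2) * Real.exp (1 / θ) *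
        ∫ x in Set.Ioi (0 : ℝ), x ^ (-(a1 - a2 + 1)) * Real.exp (-1 / x - x / θ))
      (nhdsWithin 0 (Set.Ioi 0)) atTop ∧
    ∀ᶠ θ : ℝ in nhdsWithin 0 (Set.Ioi 0),
      1 < 1 / Real.Gamma a2 * θ ^ (a1 - a2) * Real.exp (1 / θ) *
        ∫ x in Set.Ioi (0 : ℝ), x ^ (-(a1 - a2 + 1)) * Real.exp (-1 / x - x / θ) := by
  have hp : True := trivial
  set p : ℝ := -(a1 - a2 + 1) with hpdef
  set q : ℝ := (a1 - a2)/2 with hqdef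
  have hΓ : 0 < Real.Gamma a2 := Real.Gamma_pos_of_pos ha2
  have hc : (0:ℝ) < min 1 (2 ^ p) := lt_min one_pos (Real.rpow_pos_of_pos two_pos p)
  set C : ℝ := 1 / Real.Gamma a2 * min 1 (2 ^ p) with hCdef
  have hC0 : 0 < C := by positivity
  set L : ℝ → ℝ := fun θ =>
    C * ((θ⁻¹) ^ (-q) * Real.exp (θ⁻¹ - 3 * (θ⁻¹) ^ ((1:ℝ)/2))) with hLdef
  have hL : Tendsto L (nhdsWithin 0 (Set.Ioi 0)) atTop := by
    apply Tendsto.const_mul_atTop hC0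
    exact (dr_G_tendsto q).comp tendsto_inv_nhdsGT_zero
  have key : ∀ θ : ℝ, θ ∈ Set.Ioi (0:ℝ) → L θ ≤
      1 / Real.Gamma a2 * θ ^ (a1 - a2) * Real.exp (1 / θ) *
        ∫ x in Set.Ioi (0 : ℝ), x ^ (-(a1 - a2 + 1)) * Real.exp (-1 / x - x / θ) := by
    intro θ hθ
    have hθ0 : (0:ℝ) < θ := hθ
    have hs0 : (0:ℝ) < θ ^ ((1:ℝ)/2) := Real.rpow_pos_of_pos hθ0 _
    have hA : (0:ℝ) ≤ 1 / Real.Gamma a2 * θ ^ (a1 - a2) * Real.exp (1 / θ) := by positivity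
    have h2 := mul_le_mul_of_nonneg_left (dr_integral_lower p hθ0) hA
    refine le_trans (le_of_eq ?_) h2
    have e1 : (θ⁻¹) ^ (-q) = θ ^ q := by
      rw [show θ⁻¹ = θ ^ (-1:ℝ) by rw [Real.rpow_neg_one], ← Real.rpow_mul hθ0.le]
      congr 1; ring
    have e2 : (θ⁻¹) ^ ((1:ℝ)/2) = (θ ^ ((1:ℝ)/2))⁻¹ := Real.inv_rpow hθ0.le _
    have e3 : θ ^ (a1-a2) * ((θ ^ ((1:ℝ)/2)) ^ p * θ ^ ((1:ℝ)/2)) = θ ^ q := by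
      rw [← Real.rpow_mul hθ0.le, ← Real.rpow_add hθ0, ← Real.rpow_add hθ0]
      congr 1; rw [hpdef, hqdef]; ring
    have e4 : Real.exp (θ⁻¹ - 3 * (θ⁻¹) ^ ((1:ℝ)/2))
        = Real.exp (1/θ) * Real.exp (-(3 / θ ^ ((1:ℝ)/2))) := by
      rw [← Real.exp_add, e2]
      congr 1
      rw [one_div]
      ring
    rw [hLdef]
    simp only
    rw [e1, e4, ← e3, hCdef]
    ring
  constructor
  · apply tendsto_atTop_mono' _ _ hL
    filter_upwards [eventually_mem_nhdsWithin] with θ hθ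
    exact key θ hθ
  · have hT : Tendsto
        (fun θ : ℝ => 1 / Real.Gamma a2 * θ ^ (a1 - a2) * Real.exp (1 / θ) *
          ∫ x in Set.Ioi (0 : ℝ), x ^ (-(a1 - a2 + 1)) * Real.exp (-1 / x - x / θ))
        (nhdsWithin 0 (Set.Ioi 0)) atTop := by
      apply tendsto_atTop_mono' _ _ hL
      filter_upwards [eventually_mem_nhdsWithin] with θ hθ
      exact key θ hθ
    exact hT.eventually_gt_atTop 1
end

section
/- For every real ν, the Laplace-type integral ∫_0^∞ y^{−(ν+1)} · e^{−y − s/y} dy satisfies the asymptotic relation lim_{s → +∞} s^{ν/2 + 1/4} · e^{2√s} · ∫_0^∞ y^{−(ν+1)} e^{−y − s/y} dy = √π. (This is the statement, in integral form, that the modified Bessel function of the second kind satisfies K_ν(z) ≈ √(π/(2z)) e^{−z} as z → +∞, since ∫_0^∞ y^{−(ν+1)} e^{−y − z²/(4y)} dy = 2 (z/2)^{−ν} K_ν(z).) -/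
open MeasureTheory Real Filter Set

lemma aux_sqrt_atTop : Tendsto Real.sqrt atTop atTop := by
  apply tendsto_atTop_atTop.mpr
  intro b
  refine ⟨max 0 (b ^ 2), fun a ha => ?_⟩
  have h0 : (0:ℝ) ≤ a := le_trans (le_max_left _ _) ha
  have h1 : b ^ 2 ≤ a := le_trans (le_max_right _ _) ha
  rcases le_total b 0 with hb | hb
  · exact le_trans hb (Real.sqrt_nonneg a)
  · exact (Real.le_sqrt hb h0).mpr h1

lemma aux_cosh (z : ℝ) : z ^ 2 ≤ Real.exp z + Real.exp (-z) - 2 := by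
  have key : ∀ w : ℝ, 0 ≤ w → w ^ 2 ≤ Real.exp w + Real.exp (-w) - 2 := by
    intro w hw
    have h1 : w / 2 ≤ Real.sinh (w / 2) := by
      rcases eq_or_lt_of_le hw with h | h
      · simp [← h]
      · exact (Real.self_lt_sinh_iff.mpr (by linarith)).le
    have h2 : Real.sinh (w / 2) = (Real.exp (w / 2) - Real.exp (-(w / 2))) / 2 := Real.sinh_eq _
    have h3 : Real.exp (w / 2) * Real.exp (-(w / 2)) = 1 := by
      rw [← Real.exp_add]; simp
    have h4 : Real.exp w = Real.exp (w / 2) * Real.exp (w / 2) := by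
      rw [← Real.exp_add]; ring_nf
    have h5 : Real.exp (-w) = Real.exp (-(w / 2)) * Real.exp (-(w / 2)) := by
      rw [← Real.exp_add]; ring_nf
    nlinarith [Real.exp_pos (w / 2), Real.exp_pos (-(w / 2))]
  rcases le_total 0 z with h | h
  · exact key z h
  · have := key (-z) (by linarith)
    simpa [add_comm] using this

lemma aux_ptlim (ν x : ℝ) (hx : x ≠ 0) :
    Tendsto (fun t : ℝ => Real.exp (-(ν * (x / Real.sqrt t)) -
        t * (Real.exp (x / Real.sqrt t) + Real.exp (-(x / Real.sqrt t)) - 2)))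
      atTop (nhds (Real.exp (-x ^ 2))) := by
  have hz : Tendsto (fun t : ℝ => x / Real.sqrt t) atTop (nhds 0) :=
    Tendsto.div_atTop tendsto_const_nhds aux_sqrt_atTop
  have part1 : Tendsto (fun t : ℝ => -(ν * (x / Real.sqrt t))) atTop (nhds 0) := by
    simpa using ((hz.const_mul ν).neg)
  have h2t : Tendsto (fun t : ℝ => 2 * Real.sqrt t) atTop atTop :=
    aux_sqrt_atTop.const_mul_atTop two_pos
  have hw : Tendsto (fun t : ℝ => x / (2 * Real.sqrt t)) atTop (nhds 0) :=
    Tendsto.div_atTop tendsto_const_nhds h2t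
  have hw' : Tendsto (fun t : ℝ => x / (2 * Real.sqrt t)) atTop (nhdsWithin 0 {y : ℝ | y ≠ 0}) := by
    rw [tendsto_nhdsWithin_iff]
    refine ⟨hw, ?_⟩
    filter_upwards [eventually_gt_atTop (0:ℝ)] with t ht
    have : 0 < Real.sqrt t := Real.sqrt_pos.mpr ht
    exact div_ne_zero hx (by positivity)
  have hslope : Tendsto (slope Real.sinh 0) (nhdsWithin 0 {y : ℝ | y ≠ 0}) (nhds 1) := by
    have := hasDerivAt_iff_tendsto_slope.mp (Real.hasDerivAt_sinh 0)
    simp only [Real.cosh_zero] at this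
    exact this
  have hA : Tendsto (fun t : ℝ => 2 * Real.sqrt t * Real.sinh (x / (2 * Real.sqrt t)))
      atTop (nhds x) := by
    have h := (hslope.comp hw').const_mul x
    rw [mul_one] at h
    refine h.congr' ?_
    filter_upwards [eventually_gt_atTop (0:ℝ)] with t ht
    have hst : Real.sqrt t ≠ 0 := ne_of_gt (Real.sqrt_pos.mpr ht)
    simp only [Function.comp_apply, slope_def_field, Real.sinh_zero, sub_zero]
    field_simp
  have hA2 : Tendsto (fun t : ℝ => (2 * Real.sqrt t * Real.sinh (x / (2 * Real.sqrt t))) ^ 2)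
      atTop (nhds (x ^ 2)) := hA.pow 2
  have part2 : Tendsto (fun t : ℝ =>
      t * (Real.exp (x / Real.sqrt t) + Real.exp (-(x / Real.sqrt t)) - 2)) atTop (nhds (x ^ 2)) := by
    refine hA2.congr' ?_
    filter_upwards [eventually_gt_atTop (0:ℝ)] with t ht
    have hst : Real.sqrt t ≠ 0 := ne_of_gt (Real.sqrt_pos.mpr ht)
    have hhalf : x / (2 * Real.sqrt t) = (x / Real.sqrt t) / 2 := by
      rw [div_div, mul_comm]
    set z := x / Real.sqrt t with hzdef
    rw [hhalf, Real.sinh_eq]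
    have h1 : Real.exp z = Real.exp (z / 2) * Real.exp (z / 2) := by
      rw [← Real.exp_add]; ring_nf
    have h2 : Real.exp (-z) = Real.exp (-(z / 2)) * Real.exp (-(z / 2)) := by
      rw [← Real.exp_add]; ring_nf
    have h3 : Real.exp (z / 2) * Real.exp (-(z / 2)) = 1 := by
      rw [← Real.exp_add]; simp
    have h4 : Real.sqrt t * Real.sqrt t = t := Real.mul_self_sqrt ht.le
    rw [h1, h2]
    linear_combination (Real.exp (z / 2) - Real.exp (-(z / 2))) ^ 2 * h4 - 2 * t * h3
  have hinner : Tendsto (fun t : ℝ => -(ν * (x / Real.sqrt t)) -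
      t * (Real.exp (x / Real.sqrt t) + Real.exp (-(x / Real.sqrt t)) - 2)) atTop (nhds (-x ^ 2)) := by
    simpa using part1.sub part2
  exact (Real.continuous_exp.tendsto _).comp hinner

lemma aux_main (ν : ℝ) :
    Tendsto (fun t : ℝ => ∫ x : ℝ, Real.exp (-(ν * (x / Real.sqrt t)) -
        t * (Real.exp (x / Real.sqrt t) + Real.exp (-(x / Real.sqrt t)) - 2)))
      atTop (nhds (Real.sqrt Real.pi)) := by
  have hπ : ∫ x : ℝ, Real.exp (-x ^ 2) = Real.sqrt Real.pi := by
    simpa using integral_gaussian 1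
  rw [← hπ]
  apply tendsto_integral_filter_of_dominated_convergence
    (fun x : ℝ => Real.exp (|x| - x ^ 2))
  · refine Eventually.of_forall fun t => Continuous.aestronglyMeasurable ?_
    fun_prop
  · filter_upwards [eventually_ge_atTop (max 1 (ν ^ 2))] with t ht
    refine Eventually.of_forall fun x => ?_
    have ht1 : (1:ℝ) ≤ t := le_trans (le_max_left _ _) ht
    have ht0 : (0:ℝ) < t := by linarith
    have hst : 0 < Real.sqrt t := Real.sqrt_pos.mpr ht0
    have hν : |ν| ≤ Real.sqrt t := by
      have := Real.sqrt_le_sqrt (le_trans (le_max_right _ _) ht)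
      rwa [Real.sqrt_sq_eq_abs] at this
    set z := x / Real.sqrt t with hz
    have h1 : -(ν * z) ≤ |x| := by
      have habs : |ν * z| ≤ |x| := by
        rw [hz, abs_mul, abs_div, abs_of_pos hst]
        calc |ν| * (|x| / Real.sqrt t) = |x| / Real.sqrt t * |ν| := by ring
          _ ≤ |x| / Real.sqrt t * Real.sqrt t := by
              apply mul_le_mul_of_nonneg_left hν (by positivity)
          _ = |x| := by field_simp
      linarith [neg_abs_le (ν * z), abs_nonneg (ν * z)]
    have h2 : x ^ 2 ≤ t * (Real.exp z + Real.exp (-z) - 2) := by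
      have := mul_le_mul_of_nonneg_left (aux_cosh z) ht0.le
      have hzz : t * z ^ 2 = x ^ 2 := by
        rw [hz, div_pow, Real.sq_sqrt ht0.le]
        field_simp
      linarith
    rw [Real.norm_eq_abs, Real.abs_exp]
    exact Real.exp_le_exp.mpr (by linarith)
  · have hg : Integrable (fun x : ℝ => Real.exp (1/2) * Real.exp (-(1/2) * x ^ 2)) :=
      (integrable_exp_neg_mul_sq (by norm_num)).const_mul _
    refine hg.mono' ?_ ?_
    · exact (Real.continuous_exp.comp (continuous_abs.sub (continuous_pow 2))).aestronglyMeasurable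
    · refine Eventually.of_forall fun x => ?_
      rw [Real.norm_eq_abs, Real.abs_exp, ← Real.exp_add]
      refine Real.exp_le_exp.mpr ?_
      nlinarith [sq_abs x, sq_nonneg (|x| - 1)]
  · have h0 : ∀ᵐ x : ℝ, x ≠ 0 := by
      rw [ae_iff]
      simpa [Set.setOf_eq_eq_singleton] using measure_singleton (0:ℝ)
    filter_upwards [h0] with x hx
    exact aux_ptlim ν x hx

lemma aux_cov (ν s : ℝ) (hs : 1 ≤ s) :
    s ^ (ν / 2 + 1 / 4) * Real.exp (2 * Real.sqrt s) *
        (∫ y in Set.Ioi (0 : ℝ), y ^ (-(ν + 1)) * Real.exp (-y - s / y))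
    = ∫ x : ℝ, Real.exp (-(ν * (x / Real.sqrt (Real.sqrt s))) -
        Real.sqrt s * (Real.exp (x / Real.sqrt (Real.sqrt s)) +
          Real.exp (-(x / Real.sqrt (Real.sqrt s))) - 2)) := by
  have hs0 : (0:ℝ) < s := lt_of_lt_of_le one_pos hs
  set t := Real.sqrt s with htdef
  have ht0 : 0 < t := Real.sqrt_pos.mpr hs0
  set r := Real.sqrt t with hrdef
  have hr0 : 0 < r := Real.sqrt_pos.mpr ht0
  have hrr : r * r = t := Real.mul_self_sqrt ht0.le
  -- the substitution map
  set f : ℝ → ℝ := fun x => t * Real.exp (x / r) with hfdef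
  have hd : ∀ x : ℝ, HasDerivAt f (r * Real.exp (x / r)) x := by
    intro x
    have h1 : HasDerivAt (fun x : ℝ => x / r) (1 / r) x := by
      simpa using (hasDerivAt_id x).div_const r
    have h3 := (h1.exp).const_mul t
    refine h3.congr_deriv ?_
    rw [← hrr]
    field_simp
  have hinj : InjOn f univ := by
    intro a _ b _ hab
    have h1 : Real.exp (a / r) = Real.exp (b / r) :=
      mul_left_cancel₀ (ne_of_gt ht0) hab
    have h2 : a / r = b / r := Real.exp_injective h1
    field_simp [ne_of_gt hr0] at h2
    exact h2
  have himg : f '' univ = Set.Ioi (0:ℝ) := by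
    ext y
    constructor
    · rintro ⟨x, -, rfl⟩
      exact mul_pos ht0 (Real.exp_pos _)
    · intro hy
      refine ⟨r * Real.log (y / t), mem_univ _, ?_⟩
      rw [hfdef]
      simp only
      rw [mul_comm r, mul_div_assoc, div_self (ne_of_gt hr0), mul_one,
        Real.exp_log (div_pos hy ht0), mul_comm, div_mul_cancel₀ _ (ne_of_gt ht0)]
  rw [← himg, integral_image_eq_integral_abs_deriv_smul MeasurableSet.univ
      (fun x _ => (hd x).hasDerivWithinAt) hinj, MeasureTheory.setIntegral_univ,
    ← MeasureTheory.integral_const_mul]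
  refine integral_congr_ae (Eventually.of_forall fun x => ?_)
  simp only [hfdef, smul_eq_mul]
  set u := x / r with hudef
  have he : 0 < Real.exp u := Real.exp_pos u
  have hst : s = t * t := (Real.mul_self_sqrt hs0.le).symm
  have hdiv : s / (t * Real.exp u) = t * Real.exp (-u) := by
    rw [hst, Real.exp_neg]
    field_simp
  have habs : |r * Real.exp u| = r * Real.exp u := abs_of_pos (by positivity)
  rw [habs, hdiv, hst, Real.mul_rpow ht0.le ht0.le, Real.mul_rpow ht0.le he.le,
    ← Real.exp_mul]
  have hr' : r = Real.exp (Real.log t * (1 / 2)) := by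
    rw [hrdef, Real.sqrt_eq_rpow, Real.rpow_def_of_pos ht0]
  simp only [Real.rpow_def_of_pos ht0]
  rw [hr']
  simp only [← Real.exp_add]
  congr 1
  ring

/-- the asymptotics `K_ν(z) ≈ √(π/(2z)) e^{-z}` in integral form:
`lim_{s → ∞} s^{ν/2 + 1/4} e^{2√s} ∫_0^∞ y^{-(ν+1)} e^{-y - s/y} dy = √π`. -/
theorem bessel_integral_asymptotics (ν : ℝ) :
    Tendsto
      (fun s : ℝ => s ^ (ν / 2 + 1 / 4) * Real.exp (2 * Real.sqrt s) *
        ∫ y in Set.Ioi (0 : ℝ), y ^ (-(ν + 1)) * Real.exp (-y - s / y))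
      atTop (nhds (Real.sqrt Real.pi)) := by
  have comp := (aux_main ν).comp aux_sqrt_atTop
  refine Tendsto.congr' ?_ comp
  filter_upwards [eventually_ge_atTop (1:ℝ)] with s hs
  simp only [Function.comp_apply]
  exact (aux_cov ν s hs).symm
end
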